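/- (SD rewrite of the multicalibration moment.) Assume π₊ ≠ π₋ and π₊² + π₋² > 0, define P_S̃ := (π₊²/(π₊²+π₋²))·P₊ + (π₋²/(π₊²+π₋²))·P₋ and P_D̃ := (1/2)·P₊ + (1/2)·P₋. Then for all measurable f : 𝒳 → [0,1], c : 𝒳 → [−1,1], w : [0,1] → [−1,1], R_{c,w}(f) = (π₊²+π₋²)·∫ c(x)·w(f(x))·(π₊/(π₊−π₋) − f(x)) dP_S̃(x) − 2·π₊·π₋·∫ c(x)·w(f(x))·(π₋/(π₊−π₋) + f(x)) dP_D̃(x). -/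

import Mathlib

open MeasureTheory

/-- SD rewrite of the multicalibration witness moment in terms of the
similar-pair marginal `P_S̃` and the dissimilar-pair marginal `P_D̃`. -/
theorem sd_rewrite_multicalibration {X : Type*} [MeasurableSpace X]
    (Pp Pm : Measure X) [IsProbabilityMeasure Pp] [IsProbabilityMeasure Pm]
    (pip : ℝ) (hpi : pip ∈ Set.Icc (0:ℝ) 1)
    (hne : pip ≠ 1 - pip) (hpos : 0 < pip ^ 2 + (1 - pip) ^ 2)
    (f c : X → ℝ) (w : ℝ → ℝ)
    (hf : Measurable f) (hf01 : ∀ x, f x ∈ Set.Icc (0:ℝ) 1)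
    (hc : Measurable c) (hc1 : ∀ x, c x ∈ Set.Icc (-1:ℝ) 1)
    (hw : Measurable w) (hw1 : ∀ v ∈ Set.Icc (0:ℝ) 1, w v ∈ Set.Icc (-1:ℝ) 1) :
    pip * ∫ x, c x * w (f x) * (1 - f x) ∂Pp
      - (1 - pip) * ∫ x, c x * w (f x) * f x ∂Pm
    = (pip ^ 2 + (1 - pip) ^ 2) *
        ∫ x, c x * w (f x) * (pip / (pip - (1 - pip)) - f x)
          ∂(ENNReal.ofReal (pip ^ 2 / (pip ^ 2 + (1 - pip) ^ 2)) • Pp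
            + ENNReal.ofReal ((1 - pip) ^ 2 / (pip ^ 2 + (1 - pip) ^ 2)) • Pm)
      - 2 * pip * (1 - pip) *
        ∫ x, c x * w (f x) * ((1 - pip) / (pip - (1 - pip)) + f x)
          ∂(ENNReal.ofReal (1 / 2) • Pp + ENNReal.ofReal (1 / 2) • Pm) := by
  obtain ⟨hp0, hp1⟩ := hpi
  set g : X → ℝ := fun x => c x * w (f x) with hgdef
  have hgm : Measurable g := hc.mul (hw.comp hf)
  have hgb : ∀ x, ‖g x‖ ≤ 1 := by
    intro x
    have hc' := hc1 x
    have hw' := hw1 (f x) (hf01 x)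
    have h1 : |c x| ≤ 1 := abs_le.2 ⟨hc'.1, hc'.2⟩
    have h2 : |w (f x)| ≤ 1 := abs_le.2 ⟨hw'.1, hw'.2⟩
    calc ‖g x‖ = |c x| * |w (f x)| := by rw [Real.norm_eq_abs, abs_mul]
    _ ≤ 1 := by nlinarith [abs_nonneg (c x)]
  have hgfb : ∀ x, ‖g x * f x‖ ≤ 1 := by
    intro x
    have hfx := hf01 x
    have h2 : |f x| ≤ 1 := abs_le.2 ⟨by linarith [hfx.1], hfx.2⟩
    calc ‖g x * f x‖ = ‖g x‖ * |f x| := by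
          rw [Real.norm_eq_abs, Real.norm_eq_abs, abs_mul]
    _ ≤ 1 := by nlinarith [norm_nonneg (g x), hgb x]
  have hint : ∀ (μ : Measure X), IsProbabilityMeasure μ →
      ∀ (h : X → ℝ), Measurable h → (∀ x, ‖h x‖ ≤ 1) → Integrable h μ := by
    intro μ hμ h hm hb
    exact (integrable_const (1:ℝ)).mono' hm.aestronglyMeasurable (ae_of_all _ hb)
  have Igp : Integrable g Pp := hint Pp inferInstance g hgm hgb
  have Igm : Integrable g Pm := hint Pm inferInstance g hgm hgb
  have Igfp : Integrable (fun x => g x * f x) Pp :=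
    hint Pp inferInstance _ (hgm.mul hf) hgfb
  have Igfm : Integrable (fun x => g x * f x) Pm :=
    hint Pm inferInstance _ (hgm.mul hf) hgfb
  set Sp := ∫ x, g x ∂Pp
  set Sm := ∫ x, g x ∂Pm
  set Tp := ∫ x, g x * f x ∂Pp
  set Tm := ∫ x, g x * f x ∂Pm
  set s := pip ^ 2 + (1 - pip) ^ 2 with hs
  have hsne : s ≠ 0 := ne_of_gt hpos
  have hdne : pip - (1 - pip) ≠ 0 := sub_ne_zero.2 hne
  set A := pip / (pip - (1 - pip)) with hA
  set B := (1 - pip) / (pip - (1 - pip)) with hB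
  -- generic computation of the integrals over the mixture measures
  have key : ∀ (r1 r2 : ℝ), 0 ≤ r1 → 0 ≤ r2 → ∀ (a : ℝ),
      (∫ x, c x * w (f x) * (a + f x)
        ∂(ENNReal.ofReal r1 • Pp + ENNReal.ofReal r2 • Pm))
      = r1 * (a * Sp + Tp) + r2 * (a * Sm + Tm) := by
    intro r1 r2 hr1 hr2 a
    have hfun : (fun x => c x * w (f x) * (a + f x))
        = fun x => a * g x + g x * f x := by
      funext x; simp only [hgdef]; ring
    rw [hfun]
    have I1 : Integrable (fun x => a * g x + g x * f x) Pp :=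
      (Igp.const_mul a).add Igfp
    have I2 : Integrable (fun x => a * g x + g x * f x) Pm :=
      (Igm.const_mul a).add Igfm
    rw [integral_add_measure (I1.smul_measure (by simp)) (I2.smul_measure (by simp)),
      integral_smul_measure, integral_smul_measure,
      ENNReal.toReal_ofReal hr1, ENNReal.toReal_ofReal hr2,
      integral_add (Igp.const_mul a) Igfp, integral_add (Igm.const_mul a) Igfm,
      integral_const_mul, integral_const_mul]
    simp [smul_eq_mul]; rfl
  have e1 : (∫ x, c x * w (f x) * (A - f x)
      ∂(ENNReal.ofReal (pip ^ 2 / s) • Pp + ENNReal.ofReal ((1 - pip) ^ 2 / s) • Pm))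
      = (pip ^ 2 / s) * (A * Sp - Tp) + ((1 - pip) ^ 2 / s) * (A * Sm - Tm) := by
    have := key (pip ^ 2 / s) ((1 - pip) ^ 2 / s)
      (div_nonneg (sq_nonneg _) hpos.le) (div_nonneg (sq_nonneg _) hpos.le) A
    -- rewrite (A - f x) as (A + (-1) * f x)?  Instead redo with neg
    have hfun : (fun x => c x * w (f x) * (A - f x))
        = fun x => A * g x + (-1) * (g x * f x) := by
      funext x; simp only [hgdef]; ring
    have key' : ∀ (r1 r2 : ℝ), 0 ≤ r1 → 0 ≤ r2 →
        (∫ x, c x * w (f x) * (A - f x)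
          ∂(ENNReal.ofReal r1 • Pp + ENNReal.ofReal r2 • Pm))
        = r1 * (A * Sp - Tp) + r2 * (A * Sm - Tm) := by
      intro r1 r2 hr1 hr2
      rw [hfun]
      have I1 : Integrable (fun x => A * g x + (-1) * (g x * f x)) Pp :=
        (Igp.const_mul A).add (Igfp.const_mul (-1))
      have I2 : Integrable (fun x => A * g x + (-1) * (g x * f x)) Pm :=
        (Igm.const_mul A).add (Igfm.const_mul (-1))
      rw [integral_add_measure (I1.smul_measure (by simp)) (I2.smul_measure (by simp)),
        integral_smul_measure, integral_smul_measure,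
        ENNReal.toReal_ofReal hr1, ENNReal.toReal_ofReal hr2,
        integral_add (Igp.const_mul A) (Igfp.const_mul (-1)),
        integral_add (Igm.const_mul A) (Igfm.const_mul (-1)),
        integral_const_mul, integral_const_mul, integral_const_mul, integral_const_mul]
      simp [smul_eq_mul]; ring
    exact key' _ _ (div_nonneg (sq_nonneg _) hpos.le) (div_nonneg (sq_nonneg _) hpos.le)
  have e2 : (∫ x, c x * w (f x) * (B + f x)
      ∂(ENNReal.ofReal (1 / 2) • Pp + ENNReal.ofReal (1 / 2) • Pm))
      = (1 / 2) * (B * Sp + Tp) + (1 / 2) * (B * Sm + Tm) :=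
    key (1 / 2) (1 / 2) (by norm_num) (by norm_num) B
  have lhs1 : (∫ x, c x * w (f x) * (1 - f x) ∂Pp) = Sp - Tp := by
    have hfun : (fun x => c x * w (f x) * (1 - f x))
        = fun x => g x - g x * f x := by
      funext x; simp only [hgdef]; ring
    rw [hfun, integral_sub Igp Igfp]
  have lhs2 : (∫ x, c x * w (f x) * f x ∂Pm) = Tm := rfl
  rw [lhs1, e1, e2]
  simp only [hA, hB]
  field_simp
  ring
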